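/- Let ν ≥ 3 and define τ_ν(x) = x·Φ_ν(x) + √(ν/(ν−2))·φ_{ν−2}(x/√(ν/(ν−2))), where φ_ν is the standard Student-t density with ν degrees of freedom and Φ_ν its cumulative distribution function. Then for all real numbers u ≥ 0, s > 0, σ̃ > 0 and S ≥ 0: σ̃·s·τ_ν((u + S·s)/(σ̃·s)) ≤ u + (S + 2σ̃)·s. -/

import Mathlib

open MeasureTheory

/-- The standard Student-t density with `ν` degrees of freedom. -/
noncomputable def tpdf (ν x : ℝ) : ℝ :=
  Real.Gamma ((ν + 1) / 2) / (Real.sqrt (ν * Real.pi) * Real.Gamma (ν / 2)) *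
    (1 + x ^ 2 / ν) ^ (-((ν + 1) / 2))

/-- The cumulative distribution function of the standard Student-t distribution
with `ν` degrees of freedom. -/
noncomputable def tcdf (ν x : ℝ) : ℝ := ∫ t in Set.Iic x, tpdf ν t

/-- `τ_ν(x) = x·Φ_ν(x) + √(ν/(ν−2))·φ_{ν−2}(x/√(ν/(ν−2)))`. -/
noncomputable def tau (ν x : ℝ) : ℝ :=
  x * tcdf ν x +
    Real.sqrt (ν / (ν - 2)) * tpdf (ν - 2) (x / Real.sqrt (ν / (ν - 2)))

open Real Set

/-- Gautschi-type bound from log-convexity of Γ. -/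
lemma gamma_half_le (m : ℝ) (hm : 0 < m) :
    Real.Gamma (m + 1/2) ≤ Real.Gamma m * Real.sqrt m := by
  have h1 : (0:ℝ) < Real.Gamma m := Real.Gamma_pos_of_pos hm
  have h2 : (0:ℝ) < Real.Gamma (m + 1) := Real.Gamma_pos_of_pos (by linarith)
  have h3 : (0:ℝ) < Real.Gamma (m + 1/2) := Real.Gamma_pos_of_pos (by linarith)
  have hc := Real.convexOn_log_Gamma.2 (mem_Ioi.mpr hm) (mem_Ioi.mpr (by linarith : (0:ℝ) < m + 1))
    (by norm_num : (0:ℝ) ≤ (1:ℝ)/2) (by norm_num : (0:ℝ) ≤ (1:ℝ)/2) (by norm_num)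
  simp only [smul_eq_mul, Function.comp_apply] at hc
  have hmid : (1:ℝ)/2 * m + 1/2 * (m + 1) = m + 1/2 := by ring
  rw [hmid] at hc
  have hlog : Real.log (Real.Gamma (m + 1/2)) ≤ Real.log (Real.Gamma m * Real.sqrt m) := by
    have hΓ1 : Real.Gamma (m + 1) = m * Real.Gamma m := Real.Gamma_add_one hm.ne'
    have heq : Real.log (Real.Gamma m * Real.sqrt m)
        = 1/2 * Real.log (Real.Gamma m) + 1/2 * Real.log (Real.Gamma (m + 1)) := by
      rw [hΓ1, Real.log_mul h1.ne' (Real.sqrt_pos.mpr hm).ne',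
        Real.log_mul hm.ne' h1.ne', Real.log_sqrt hm.le]
      ring
    linarith [hc]
  exact (Real.log_le_log_iff h3 (by positivity)).mp hlog

lemma tpdf_nonneg {ν : ℝ} (hν : 0 ≤ ν) (x : ℝ) : 0 ≤ tpdf ν x := by
  unfold tpdf
  have h1 : (0:ℝ) ≤ 1 + x ^ 2 / ν := by positivity
  have := Real.Gamma_nonneg_of_nonneg (by linarith : (0:ℝ) ≤ (ν+1)/2)
  have := Real.Gamma_nonneg_of_nonneg (by linarith : (0:ℝ) ≤ ν/2)
  have := Real.sqrt_nonneg (ν * Real.pi)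
  have := Real.rpow_nonneg h1 (-((ν + 1) / 2))
  positivity

/-- The peak bound. -/
lemma tpdf_le_peak {ν : ℝ} (hν : 0 < ν) (x : ℝ) :
    tpdf ν x ≤ Real.Gamma ((ν + 1) / 2) / (Real.sqrt (ν * Real.pi) * Real.Gamma (ν / 2)) := by
  unfold tpdf
  have hbase : (1:ℝ) ≤ 1 + x ^ 2 / ν := by
    have : (0:ℝ) ≤ x ^ 2 / ν := by positivity
    linarith
  have hexp : (-((ν + 1) / 2)) ≤ 0 := by linarith
  have hle : (1 + x ^ 2 / ν) ^ (-((ν + 1) / 2)) ≤ 1 :=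
    Real.rpow_le_one_of_one_le_of_nonpos hbase hexp
  have hC : (0:ℝ) ≤ Real.Gamma ((ν + 1) / 2) / (Real.sqrt (ν * Real.pi) * Real.Gamma (ν / 2)) := by
    have := Real.Gamma_pos_of_pos (by linarith : (0:ℝ) < (ν+1)/2)
    have := Real.Gamma_pos_of_pos (by linarith : (0:ℝ) < ν/2)
    have hπ : (0:ℝ) < ν * Real.pi := by positivity
    positivity
  calc Real.Gamma ((ν + 1) / 2) / (Real.sqrt (ν * Real.pi) * Real.Gamma (ν / 2)) *
        (1 + x ^ 2 / ν) ^ (-((ν + 1) / 2))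
      ≤ Real.Gamma ((ν + 1) / 2) / (Real.sqrt (ν * Real.pi) * Real.Gamma (ν / 2)) * 1 :=
        mul_le_mul_of_nonneg_left hle hC
    _ = _ := mul_one _

lemma integrable_kernel {ν p : ℝ} (hν : 1 ≤ ν) (hp : 1 ≤ p) :
    Integrable (fun t : ℝ => (1 + t ^ 2 / ν) ^ (-p)) := by
  have hν0 : (0:ℝ) < ν := by linarith
  have hcont : Continuous (fun t : ℝ => (1 + t ^ 2 / ν) ^ (-p)) := by
    apply Continuous.rpow_const
    · continuity
    · intro t
      left
      have : (0:ℝ) ≤ t ^ 2 / ν := by positivity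
      nlinarith
  refine Integrable.mono' (g := fun t => ν * (1 + t ^ 2)⁻¹)
    (integrable_inv_one_add_sq.const_mul ν) hcont.aestronglyMeasurable ?_
  filter_upwards with t
  have hb : (1:ℝ) ≤ 1 + t ^ 2 / ν := by
    have : (0:ℝ) ≤ t ^ 2 / ν := by positivity
    linarith
  have h1 : (1 + t ^ 2 / ν) ^ (-p) ≤ (1 + t ^ 2 / ν) ^ (-(1:ℝ)) :=
    Real.rpow_le_rpow_of_exponent_le hb (by linarith)
  have h2 : (1 + t ^ 2 / ν) ^ (-(1:ℝ)) = (1 + t ^ 2 / ν)⁻¹ := by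
    rw [Real.rpow_neg (by linarith), Real.rpow_one]
  have h3 : (1 + t ^ 2 / ν)⁻¹ ≤ ν * (1 + t ^ 2)⁻¹ := by
    have hpos : (0:ℝ) < 1 + t ^ 2 := by positivity
    have hmul : ν * (1 + t ^ 2 / ν) = ν + t ^ 2 := by field_simp
    rw [inv_le_iff_one_le_mul₀ (by linarith : (0:ℝ) < 1 + t^2/ν)]
    calc (1:ℝ) = (1 + t^2)⁻¹ * (1 + t^2) := (inv_mul_cancel₀ hpos.ne').symm
      _ ≤ (1 + t^2)⁻¹ * (ν * (1 + t^2/ν)) := by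
          rw [hmul]
          exact mul_le_mul_of_nonneg_left (by linarith) (by positivity)
      _ = ν * (1 + t^2)⁻¹ * (1 + t^2/ν) := by ring
  have hnn : (0:ℝ) ≤ (1 + t ^ 2 / ν) ^ (-p) := Real.rpow_nonneg (by linarith) _
  rw [Real.norm_eq_abs, abs_of_nonneg hnn]
  linarith

/-- Student-t normalization integral via Tonelli + Gaussian. -/
lemma integral_kernel {ν p : ℝ} (hν : 1 ≤ ν) (hp : 1 ≤ p) :
    ∫ t : ℝ, (1 + t ^ 2 / ν) ^ (-p)
      = Real.sqrt (ν * Real.pi) * Real.Gamma (p - 1/2) / Real.Gamma p := by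
  have hν0 : (0:ℝ) < ν := by linarith
  have hp0 : (0:ℝ) < p := by linarith
  have hp2 : (0:ℝ) < p - 1/2 := by linarith
  have hΓp : (0:ℝ) < Real.Gamma p := Real.Gamma_pos_of_pos hp0
  set f : ℝ → ℝ → ℝ := fun s t => s ^ (p - 1) * Real.exp (-((1 + t ^ 2 / ν) * s)) with hf
  have hmeas : AEStronglyMeasurable (Function.uncurry f)
      ((volume.restrict (Ioi (0:ℝ))).prod volume) := by
    apply Measurable.aestronglyMeasurable
    fun_prop
  have hsplit : ∀ s t : ℝ, f s t = (s ^ (p-1) * Real.exp (-s)) * Real.exp (-(s/ν) * t^2) := by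
    intro s t
    rw [hf]
    simp only []
    rw [mul_assoc, ← Real.exp_add]
    congr 2
    ring
  have hsect : ∀ s : ℝ, s ∈ Ioi (0:ℝ) → Integrable (fun t => f s t) := by
    intro s hs
    simp only [mem_Ioi] at hs
    have hg : Integrable (fun t : ℝ => Real.exp (-(s/ν) * t^2)) :=
      integrable_exp_neg_mul_sq (by positivity)
    have h := hg.const_mul (s ^ (p-1) * Real.exp (-s))
    refine h.congr ?_
    filter_upwards with t
    rw [hsplit s t]
  have hval : ∀ s : ℝ, s ∈ Ioi (0:ℝ) →
      (∫ t : ℝ, f s t) = Real.sqrt (ν * Real.pi) * (Real.exp (-s) * s ^ (p - 1/2 - 1)) := by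
    intro s hs
    simp only [mem_Ioi] at hs
    have hcalc : (∫ t : ℝ, f s t)
        = (s ^ (p-1) * Real.exp (-s)) * ∫ t : ℝ, Real.exp (-(s/ν) * t^2) := by
      rw [← integral_const_mul]
      exact integral_congr_ae (Filter.Eventually.of_forall fun t => hsplit s t)
    rw [hcalc, integral_gaussian]
    have h1 : Real.pi / (s/ν) = (ν * Real.pi) / s := by
      field_simp
    rw [h1, Real.sqrt_div (by positivity) s, Real.sqrt_eq_rpow s]
    have h2 : s ^ (p - 1/2 - 1) = s ^ (p-1) / s ^ ((1:ℝ)/2) := by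
      rw [← Real.rpow_sub hs]
      congr 1
      ring
    rw [h2]
    have hsp : (0:ℝ) < s ^ ((1:ℝ)/2) := Real.rpow_pos_of_pos hs _
    field_simp
  -- integrability of the norm integral
  have hnormint : Integrable (fun s => ∫ t : ℝ, ‖f s t‖) (volume.restrict (Ioi (0:ℝ))) := by
    have base : IntegrableOn (fun s : ℝ => Real.exp (-s) * s ^ (p - 1/2 - 1)) (Ioi 0) :=
      Real.GammaIntegral_convergent hp2
    have hbc : Integrable (fun s : ℝ => Real.sqrt (ν * Real.pi) * (Real.exp (-s) * s ^ (p - 1/2 - 1)))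
        (volume.restrict (Ioi (0:ℝ))) := base.const_mul _
    refine hbc.congr ?_
    filter_upwards [ae_restrict_mem measurableSet_Ioi] with s hs
    have hs0 : (0:ℝ) < s := hs
    have hfn : ∀ t : ℝ, ‖f s t‖ = f s t := by
      intro t
      rw [Real.norm_eq_abs, abs_of_nonneg]
      rw [hsplit s t]
      have : (0:ℝ) ≤ s ^ (p-1) := (Real.rpow_pos_of_pos hs0 _).le
      positivity
    rw [show (fun t => ‖f s t‖) = fun t => f s t from funext hfn]
    exact (hval s hs).symm
  have hprodint : Integrable (Function.uncurry f) ((volume.restrict (Ioi (0:ℝ))).prod volume) := by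
    rw [integrable_prod_iff hmeas]
    exact ⟨(ae_restrict_mem measurableSet_Ioi).mono fun s hs => hsect s hs, hnormint⟩
  have hswap := integral_integral_swap hprodint
  have hL : ∫ s in Ioi (0:ℝ), ∫ t : ℝ, f s t = Real.sqrt (ν * Real.pi) * Real.Gamma (p - 1/2) := by
    rw [Real.Gamma_eq_integral hp2, ← integral_const_mul]
    exact setIntegral_congr_fun measurableSet_Ioi (fun s hs => hval s hs)
  have hR : ∫ t : ℝ, ∫ s in Ioi (0:ℝ), f s t
      = Real.Gamma p * ∫ t : ℝ, (1 + t ^ 2 / ν) ^ (-p) := by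
    rw [← integral_const_mul]
    refine integral_congr_ae (Filter.Eventually.of_forall fun t => ?_)
    have hr : (0:ℝ) < 1 + t ^ 2 / ν := by positivity
    have hint := Real.integral_rpow_mul_exp_neg_mul_Ioi hp0 hr
    calc ∫ s in Ioi (0:ℝ), f s t
        = ∫ s in Ioi (0:ℝ), s ^ (p - 1) * Real.exp (-((1 + t ^ 2 / ν) * s)) := rfl
      _ = (1 / (1 + t ^ 2 / ν)) ^ p * Real.Gamma p := hint
      _ = Real.Gamma p * (1 + t ^ 2 / ν) ^ (-p) := by
          rw [one_div, Real.inv_rpow hr.le, ← Real.rpow_neg hr.le]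
          ring
  have hfinal : Real.Gamma p * ∫ t : ℝ, (1 + t ^ 2 / ν) ^ (-p)
      = Real.sqrt (ν * Real.pi) * Real.Gamma (p - 1/2) := by
    rw [← hR, ← hswap, hL]
  rw [eq_div_iff hΓp.ne']
  linarith [hfinal]

lemma integral_tpdf {ν : ℝ} (hν : 1 ≤ ν) : ∫ t : ℝ, tpdf ν t = 1 := by
  have hν0 : (0:ℝ) < ν := by linarith
  have hp : (1:ℝ) ≤ (ν + 1)/2 := by linarith
  have hkey := integral_kernel (ν := ν) (p := (ν+1)/2) hν hp
  have h12 : (ν + 1)/2 - 1/2 = ν/2 := by ring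
  rw [h12] at hkey
  unfold tpdf
  rw [integral_const_mul, hkey]
  have hΓ1 : (0:ℝ) < Real.Gamma ((ν+1)/2) := Real.Gamma_pos_of_pos (by linarith)
  have hΓ2 : (0:ℝ) < Real.Gamma (ν/2) := Real.Gamma_pos_of_pos (by linarith)
  have hs : (0:ℝ) < Real.sqrt (ν * Real.pi) := Real.sqrt_pos.mpr (by positivity)
  field_simp

lemma tcdf_le_one {ν : ℝ} (hν : 1 ≤ ν) (x : ℝ) : tcdf ν x ≤ 1 := by
  have hν0 : (0:ℝ) < ν := by linarith
  have hint : Integrable (tpdf ν) := by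
    have h := (integrable_kernel (ν := ν) (p := (ν+1)/2) hν (by linarith)).const_mul
      (Real.Gamma ((ν + 1) / 2) / (Real.sqrt (ν * Real.pi) * Real.Gamma (ν / 2)))
    refine h.congr ?_
    filter_upwards with t
    unfold tpdf
    norm_num
  calc tcdf ν x ≤ ∫ t : ℝ, tpdf ν t := by
        unfold tcdf
        exact setIntegral_le_integral hint (Filter.Eventually.of_forall (tpdf_nonneg hν0.le))
    _ = 1 := integral_tpdf hν

/-- HEI upper bound: for `ν ≥ 3` and all `u ≥ 0`, `s > 0`,
`σ̃ > 0`, `S ≥ 0`, `σ̃·s·τ_ν((u + S·s)/(σ̃·s)) ≤ u + (S + 2σ̃)·s`. -/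
theorem hei_upper_bound (ν : ℝ) (hν : 3 ≤ ν)
    (u s σt S : ℝ) (hu : 0 ≤ u) (hs : 0 < s) (hσt : 0 < σt) (hS : 0 ≤ S) :
    σt * s * tau ν ((u + S * s) / (σt * s)) ≤ u + (S + 2 * σt) * s := by
  set x := (u + S * s) / (σt * s) with hx
  have hσs : (0:ℝ) < σt * s := by positivity
  have hx0 : 0 ≤ x := div_nonneg (by positivity) hσs.le
  -- bound tau ν x ≤ x + 2
  have htau : tau ν x ≤ x + 2 := by
    unfold tau
    have h1 : x * tcdf ν x ≤ x * 1 :=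
      mul_le_mul_of_nonneg_left (tcdf_le_one (by linarith) x) hx0
    have hm : (0:ℝ) < ν - 2 := by linarith
    have h2 : Real.sqrt (ν / (ν - 2)) * tpdf (ν - 2) (x / Real.sqrt (ν / (ν - 2))) ≤ 2 := by
      have hpeak := tpdf_le_peak (ν := ν - 2) hm (x / Real.sqrt (ν / (ν - 2)))
      have hsr : (0:ℝ) ≤ Real.sqrt (ν / (ν - 2)) := Real.sqrt_nonneg _
      have hstep : Real.sqrt (ν / (ν - 2)) * tpdf (ν - 2) (x / Real.sqrt (ν / (ν - 2)))
          ≤ Real.sqrt (ν / (ν - 2)) *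
            (Real.Gamma ((ν - 2 + 1) / 2) / (Real.sqrt ((ν - 2) * Real.pi) * Real.Gamma ((ν - 2) / 2))) :=
        mul_le_mul_of_nonneg_left hpeak hsr
      refine hstep.trans ?_
      -- Γ((ν-1)/2) ≤ Γ((ν-2)/2)·√((ν-2)/2)
      have hgam := gamma_half_le ((ν - 2)/2) (by linarith)
      have hmid : (ν - 2)/2 + 1/2 = (ν - 2 + 1)/2 := by ring
      rw [hmid] at hgam
      have hΓ2 : (0:ℝ) < Real.Gamma ((ν - 2) / 2) := Real.Gamma_pos_of_pos (by linarith)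
      have hsd : (0:ℝ) < Real.sqrt ((ν - 2) * Real.pi) := Real.sqrt_pos.mpr (by positivity)
      have hb1 : Real.Gamma ((ν - 2 + 1) / 2) / (Real.sqrt ((ν - 2) * Real.pi) * Real.Gamma ((ν - 2) / 2))
          ≤ Real.sqrt ((ν - 2)/2) / Real.sqrt ((ν - 2) * Real.pi) := by
        have hD : (0:ℝ) < Real.sqrt ((ν - 2) * Real.pi) * Real.Gamma ((ν - 2) / 2) := by positivity
        calc Real.Gamma ((ν - 2 + 1) / 2) / (Real.sqrt ((ν - 2) * Real.pi) * Real.Gamma ((ν - 2) / 2))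
            ≤ (Real.Gamma ((ν-2)/2) * Real.sqrt ((ν-2)/2)) /
              (Real.sqrt ((ν - 2) * Real.pi) * Real.Gamma ((ν - 2) / 2)) :=
              by gcongr
          _ = Real.sqrt ((ν - 2)/2) / Real.sqrt ((ν - 2) * Real.pi) := by
              rw [mul_comm (Real.sqrt ((ν - 2) * Real.pi)) _]
              exact mul_div_mul_left _ _ hΓ2.ne'
      have hb2 : Real.sqrt (ν / (ν - 2)) *
          (Real.Gamma ((ν - 2 + 1) / 2) / (Real.sqrt ((ν - 2) * Real.pi) * Real.Gamma ((ν - 2) / 2)))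
          ≤ Real.sqrt (ν / (ν - 2)) * (Real.sqrt ((ν - 2)/2) / Real.sqrt ((ν - 2) * Real.pi)) :=
        mul_le_mul_of_nonneg_left hb1 hsr
      refine hb2.trans ?_
      -- √(ν/(ν-2)) · √((ν-2)/2)/√((ν-2)π) = √(ν/((ν-2)·2π)) ≤ √(3/(2π)) < 2
      have hcollapse : Real.sqrt (ν / (ν - 2)) * (Real.sqrt ((ν - 2)/2) / Real.sqrt ((ν - 2) * Real.pi))
          = Real.sqrt (ν / (ν - 2) * ((ν - 2)/2) / ((ν - 2) * Real.pi)) := by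
        rw [Real.sqrt_div (by positivity : (0:ℝ) ≤ ν / (ν - 2) * ((ν - 2)/2)) ((ν - 2) * Real.pi),
          Real.sqrt_mul (by positivity : (0:ℝ) ≤ ν / (ν - 2)) ((ν - 2)/2)]
        ring
      rw [hcollapse]
      have harg : ν / (ν - 2) * ((ν - 2)/2) / ((ν - 2) * Real.pi) = ν / (2 * (ν - 2) * Real.pi) := by
        rw [div_eq_div_iff (by positivity) (by positivity)]
        field_simp
      rw [harg]
      have hle3 : ν / (2 * (ν - 2) * Real.pi) ≤ 4 := by
        rw [div_le_iff₀ (by positivity)]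
        nlinarith [Real.pi_gt_three]
      calc Real.sqrt (ν / (2 * (ν - 2) * Real.pi)) ≤ Real.sqrt 4 :=
            Real.sqrt_le_sqrt hle3
        _ = 2 := by
            rw [show (4:ℝ) = 2^2 by norm_num, Real.sqrt_sq (by norm_num)]
      -- done h2
    linarith
  calc σt * s * tau ν x ≤ σt * s * (x + 2) :=
        mul_le_mul_of_nonneg_left htau hσs.le
    _ = (u + S * s) + 2 * (σt * s) := by
        rw [hx]
        field_simp
    _ = u + (S + 2 * σt) * s := by ring
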